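/- (Ky Fan, n = 1 case) Let K be an antipodally symmetric triangulation of the circle S^1 with free simplicial involution ν, and λ : vert(K) → {±1,...,±m} a labelling with λ(ν(v)) = -λ(v) for all v and λ(v)+λ(v') ≠ 0 for all edges. Then m ≥ 2, and the number of edges {v,v'} of K whose label pair is of the form {+i, -j} with 1 ≤ i < j ≤ m is odd. -/
import Mathlib


open Classical

/-- Characterisation of the unordered pair equality `{x,y} = {a,-b}` when `1 ≤ a < b`. -/
lemma ky_fan_pair_char (x y a b : ℤ) (ha : 1 ≤ a) (hab : a < b) :
    ({x, y} : Finset ℤ) = {a, -b} ↔ (x = a ∧ y = -b) ∨ (x = -b ∧ y = a) := by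
  constructor
  · intro h
    have hx : x ∈ ({a, -b} : Finset ℤ) := by rw [← h]; simp
    have hy : y ∈ ({a, -b} : Finset ℤ) := by rw [← h]; simp
    have hb : -b ∈ ({x, y} : Finset ℤ) := by rw [h]; simp
    have ha' : a ∈ ({x, y} : Finset ℤ) := by rw [h]; simp
    simp only [Finset.mem_insert, Finset.mem_singleton] at hx hy hb ha'
    omega
  · rintro (⟨hx, hy⟩ | ⟨hx, hy⟩) <;> subst hx <;> subst hy
    · rfl
    · exact Finset.pair_comm _ _

/-- The "counted edge" condition is equivalent to: the two labels have opposite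
signs and negative sum. -/
lemma ky_fan_edge_char (m : ℕ) (x y : ℤ) (hx : x ≠ 0) (hy : y ≠ 0)
    (hxm : |x| ≤ (m : ℤ)) (hym : |y| ≤ (m : ℤ)) :
    (∃ a b : ℤ, 1 ≤ a ∧ a < b ∧ b ≤ (m : ℤ) ∧ ({x, y} : Finset ℤ) = {a, -b}) ↔
      (x * y < 0 ∧ x + y < 0) := by
  obtain ⟨hx1, hx2⟩ := abs_le.1 hxm
  obtain ⟨hy1, hy2⟩ := abs_le.1 hym
  constructor
  · rintro ⟨a, b, ha, hab, hbm, hpair⟩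
    rcases (ky_fan_pair_char x y a b ha hab).1 hpair with ⟨h1, h2⟩ | ⟨h1, h2⟩ <;>
      subst h1 <;> subst h2 <;> constructor <;> nlinarith
  · rintro ⟨hprod, hsum⟩
    rcases hx.lt_or_gt with hxneg | hxpos
    · have hypos : 0 < y := by nlinarith
      exact ⟨y, -x, by omega, by omega, by omega,
        (ky_fan_pair_char x y y (-x) (by omega) (by omega)).2 (Or.inr ⟨by omega, rfl⟩)⟩
    · have hyneg : y < 0 := by nlinarith
      exact ⟨x, -y, by omega, by omega, by omega,
        (ky_fan_pair_char x y x (-y) (by omega) (by omega)).2 (Or.inl ⟨rfl, by omega⟩)⟩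

/-- Ky Fan, `n = 1`: An antipodally symmetric triangulation of the
circle `S^1` is a cyclic sequence of `2N` vertices (`N ≥ 2`), modelled by
`ZMod (2N)`, with free involution `i ↦ i + N` and edges `{i, i+1}`.  Let
`λ : ZMod (2N) → {±1, …, ±m}` satisfy `λ(i + N) = -λ(i)` and `λ(i) + λ(i+1) ≠ 0`
for all `i`.  Then `m ≥ 2` and the number of edges whose label pair has the form
`{+i, -j}` with `1 ≤ i < j ≤ m` is odd. -/
theorem ky_fan_circle (N m : ℕ) [NeZero (2 * N)] (hN : 2 ≤ N)
    (lab : ZMod (2 * N) → ℤ)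
    (hrange : ∀ i, lab i ≠ 0 ∧ |lab i| ≤ (m : ℤ))
    (hequiv : ∀ i, lab (i + (N : ZMod (2 * N))) = -lab i)
    (hnocomp : ∀ i, lab i + lab (i + 1) ≠ 0) :
    2 ≤ m ∧
    Odd ((Finset.univ.filter fun i : ZMod (2 * N) =>
      ∃ a b : ℤ, 1 ≤ a ∧ a < b ∧ b ≤ (m : ℤ) ∧
        ({lab i, lab (i + 1)} : Finset ℤ) = {a, -b}).card) := by
  -- Rewrite the counted set using the sign characterisation.
  have hfilter : (Finset.univ.filter fun i : ZMod (2 * N) =>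
      ∃ a b : ℤ, 1 ≤ a ∧ a < b ∧ b ≤ (m : ℤ) ∧
        ({lab i, lab (i + 1)} : Finset ℤ) = {a, -b}) =
      Finset.univ.filter fun i : ZMod (2 * N) =>
        lab i * lab (i + 1) < 0 ∧ lab i + lab (i + 1) < 0 := by
    apply Finset.filter_congr
    intro i _
    exact ky_fan_edge_char m _ _ (hrange i).1 (hrange (i + 1)).1 (hrange i).2 (hrange (i + 1)).2
  set C := Finset.univ.filter fun i : ZMod (2 * N) =>
    lab i * lab (i + 1) < 0 ∧ lab i + lab (i + 1) < 0 with hC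
  set C' := Finset.univ.filter fun i : ZMod (2 * N) =>
    lab i * lab (i + 1) < 0 ∧ 0 < lab i + lab (i + 1) with hC'
  set S := Finset.univ.filter fun i : ZMod (2 * N) => lab i * lab (i + 1) < 0 with hS
  have hNN : (N : ZMod (2 * N)) + (N : ZMod (2 * N)) = 0 := by
    have h2 : ((N + N : ℕ) : ZMod (2 * N)) = 0 := by
      rw [← two_mul]; exact ZMod.natCast_self _
    rwa [Nat.cast_add] at h2
  have hA : ∀ i : ZMod (2 * N), lab (i + N + 1) = -lab (i + 1) := by
    intro i
    rw [add_right_comm, hequiv]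
  -- S is the disjoint union of C and C'.
  have hdisj : Disjoint C C' := by
    rw [Finset.disjoint_left]
    intro i hi hi'
    simp only [hC, hC', Finset.mem_filter] at hi hi'
    linarith [hi.2.2, hi'.2.2]
  have hsplit : S.card = C.card + C'.card := by
    rw [← Finset.card_union_of_disjoint hdisj]
    congr 1
    rw [hC, hC', hS, ← Finset.filter_or]
    apply Finset.filter_congr
    intro i _
    constructor
    · intro h1
      rcases (hnocomp i).lt_or_gt with h2 | h2
      · exact Or.inl ⟨h1, h2⟩
      · exact Or.inr ⟨h1, h2⟩
    · rintro (⟨h1, _⟩ | ⟨h1, _⟩) <;> exact h1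
  -- C and C' are in bijection via the antipodal map.
  have hbij : C'.card = C.card := by
    apply Finset.card_bij' (fun a _ => a + (N : ZMod (2 * N))) (fun a _ => a + (N : ZMod (2 * N)))
    · intro a ha
      simp only [hC, hC', Finset.mem_filter, Finset.mem_univ, true_and] at ha ⊢
      rw [hequiv, hA]
      constructor
      · nlinarith [ha.1]
      · linarith [ha.2]
    · intro a ha
      simp only [hC, hC', Finset.mem_filter, Finset.mem_univ, true_and] at ha ⊢
      rw [hequiv, hA]
      constructor
      · nlinarith [ha.1]
      · linarith [ha.2]
    · intro a _; rw [add_assoc, hNN, add_zero]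
    · intro a _; rw [add_assoc, hNN, add_zero]
  -- Count S via natural number representatives.
  have hScard : S.card = ((Finset.range (2 * N)).filter fun k : ℕ =>
      lab ((k : ZMod (2 * N))) * lab ((k : ZMod (2 * N)) + 1) < 0).card := by
    apply Finset.card_bij' (fun (a : ZMod (2 * N)) _ => a.val)
      (fun (k : ℕ) _ => (k : ZMod (2 * N)))
    · intro a ha
      simp only [hS, Finset.mem_filter, Finset.mem_univ, true_and] at ha
      simp only [Finset.mem_filter, Finset.mem_range]
      rw [ZMod.natCast_rightInverse a]
      exact ⟨ZMod.val_lt a, ha⟩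
    · intro k hk
      simp only [Finset.mem_filter, Finset.mem_range] at hk
      simp only [hS, Finset.mem_filter, Finset.mem_univ, true_and]
      exact hk.2
    · intro a _; exact ZMod.natCast_rightInverse a
    · intro k hk
      simp only [Finset.mem_filter, Finset.mem_range] at hk
      exact ZMod.val_cast_of_lt hk.1
  -- Split the range count into two equal halves.
  set h := ((Finset.range N).filter fun k : ℕ =>
      lab ((k : ZMod (2 * N))) * lab ((k : ZMod (2 * N)) + 1) < 0).card with hh
  have hrange2 : Finset.range (2 * N) = Finset.range (N + N) := by rw [two_mul]
  have hhalf : S.card = 2 * h := by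
    rw [hScard, hrange2, Finset.card_filter, Finset.sum_range_add, two_mul h]
    congr 1
    · rw [hh, Finset.card_filter]
    · rw [hh, Finset.card_filter]
      apply Finset.sum_congr rfl
      intro k _
      have hcast : ((N + k : ℕ) : ZMod (2 * N)) = (k : ZMod (2 * N)) + (N : ZMod (2 * N)) := by
        push_cast; ring
      rw [hcast, hequiv, hA]
      congr 1
      simp only [eq_iff_iff]
      constructor <;> intro hlt <;> nlinarith
  -- Parity: h is odd by a telescoping argument.
  have hodd : Odd h := by
    set g : ℕ → ZMod 2 := fun k => if 0 < lab ((k : ZMod (2 * N))) then 0 else 1 with hg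
    have hterm : ∀ k : ℕ, (if lab ((k : ZMod (2 * N))) * lab ((k : ZMod (2 * N)) + 1) < 0
        then (1 : ZMod 2) else 0) = g (k + 1) - g k := by
      intro k
      have hcast : ((k + 1 : ℕ) : ZMod (2 * N)) = (k : ZMod (2 * N)) + 1 := by push_cast; ring
      simp only [hg, hcast]
      rcases (hrange ((k : ZMod (2 * N)))).1.lt_or_gt with hx | hx <;>
        rcases (hrange ((k : ZMod (2 * N)) + 1)).1.lt_or_gt with hy | hy
      · rw [if_neg (by nlinarith), if_neg (by linarith), if_neg (by linarith)]; decide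
      · rw [if_pos (by nlinarith), if_pos (by linarith), if_neg (by linarith)]; decide
      · rw [if_pos (by nlinarith), if_neg (by linarith), if_pos (by linarith)]; decide
      · rw [if_neg (by nlinarith), if_pos (by linarith), if_pos (by linarith)]; decide
    have hsum : ((h : ℕ) : ZMod 2) = 1 := by
      rw [hh, Finset.card_filter, Nat.cast_sum]
      have heq : ∀ k ∈ Finset.range N,
          ((if lab ((k : ZMod (2 * N))) * lab ((k : ZMod (2 * N)) + 1) < 0
          then (1 : ℕ) else 0 : ℕ) : ZMod 2) = g (k + 1) - g k := by
        intro k _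
        rw [← hterm k]
        split <;> simp
      rw [Finset.sum_congr rfl heq, Finset.sum_range_sub g N]
      have h0N : ((N : ℕ) : ZMod (2 * N)) = (0 : ZMod (2 * N)) + (N : ZMod (2 * N)) := by
        rw [zero_add]
      have hlabN : lab ((N : ℕ) : ZMod (2 * N)) = -lab 0 := by rw [h0N, hequiv]
      simp only [hg, Nat.cast_zero, hlabN]
      rcases (hrange (0 : ZMod (2 * N))).1.lt_or_gt with h0 | h0
      · rw [if_pos (by linarith), if_neg (by linarith)]; decide
      · rw [if_neg (by linarith), if_pos (by linarith)]; decide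
    rw [Nat.odd_iff]
    rcases Nat.mod_two_eq_zero_or_one h with hmod | hmod
    · exfalso
      rw [← ZMod.natCast_mod h 2, hmod] at hsum
      simp at hsum
    · exact hmod
  -- Combine: the counted set has cardinality h.
  have hCcard : C.card = h := by omega
  have hCodd : Odd C.card := hCcard ▸ hodd
  refine ⟨?_, ?_⟩
  · -- C is nonempty, producing a label of absolute value at least 2.
    have hne : C.Nonempty := by
      rw [← Finset.card_pos]
      rcases hCodd with ⟨t, ht⟩
      omega
    obtain ⟨i, hi⟩ := hne
    simp only [hC, Finset.mem_filter, Finset.mem_univ, true_and] at hi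
    obtain ⟨hprod, hsum⟩ := hi
    obtain ⟨hx1, hx2⟩ := abs_le.1 (hrange i).2
    obtain ⟨hy1, hy2⟩ := abs_le.1 (hrange (i + 1)).2
    rcases (hrange i).1.lt_or_gt with hx | hx
    · have hy : 0 < lab (i + 1) := by nlinarith
      omega
    · have hy : lab (i + 1) < 0 := by nlinarith
      omega
  · rw [hfilter]
    exact hCodd
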